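/- Let (X,d) be a compact metric space and T : X → X a continuous map. Then the spanning numbers of the induced hyperspace map are bounded in n for every scale if and only if the spanning numbers of T are: (for every ε > 0 there exists C > 0 with Span(T_K, n, ε) ≤ C for all n) if and only if (for every ε > 0 there exists C > 0 with Span(T, n, ε) ≤ C for all n). (Equivalently, the generalized entropy o(T_K) equals the class ⟦0⟧ of constant sequences if and only if o(T) = ⟦0⟧.) -/

import Mathlib

open Metric Filter TopologicalSpace MeasureTheory Set

namespace Paper

variable {α : Type*}

/-- `A` is `(n,ε)`-separated for the iterates of `S`, w.r.t. the distance function `D`. -/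
def IsSep (D : α → α → ℝ) (S : α → α) (n : ℕ) (ε : ℝ) (A : Set α) : Prop :=
  ∀ x ∈ A, ∀ y ∈ A, x ≠ y → ∃ i < n, ε ≤ D (S^[i] x) (S^[i] y)

/-- `Sep(S,n,ε)`: maximal cardinality of an `(n,ε)`-separated set. -/
noncomputable def sep (D : α → α → ℝ) (S : α → α) (n : ℕ) (ε : ℝ) : ℕ :=
  sSup {k | ∃ A : Finset α, A.card = k ∧ IsSep D S n ε ↑A}

/-- `E` is `(n,ε)`-spanning for the iterates of `S`, w.r.t. the distance function `D`. -/
def IsSpan (D : α → α → ℝ) (S : α → α) (n : ℕ) (ε : ℝ) (E : Finset α) : Prop :=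
  ∀ x : α, ∃ y ∈ E, ∀ i < n, D (S^[i] x) (S^[i] y) < ε

/-- `Span(S,n,ε)`: minimal cardinality of an `(n,ε)`-spanning set. -/
noncomputable def span (D : α → α → ℝ) (S : α → α) (n : ℕ) (ε : ℝ) : ℕ :=
  sInf {k | ∃ E : Finset α, E.card = k ∧ IsSpan D S n ε E}

variable {X : Type*} [MetricSpace X]

/-- The induced hyperspace map `T_K` on nonempty compact (= closed, for `X` compact) subsets. -/
noncomputable def indK (T : X → X) (hT : Continuous T) :
    NonemptyCompacts X → NonemptyCompacts X :=
  fun W => ⟨⟨T '' ↑W, W.isCompact.image hT⟩, W.nonempty.image T⟩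

variable [MeasurableSpace X] [BorelSpace X]

/-- The measure-induced (push-forward) map `T_*` on Borel probability measures. -/
noncomputable def push (T : X → X) (hT : Continuous T) :
    ProbabilityMeasure X → ProbabilityMeasure X :=
  fun μ => ⟨(μ : Measure X).map T, Measure.isProbabilityMeasure_map hT.measurable.aemeasurable⟩

/-- The (one-sided) Lévy–Prokhorov metric
`ρ(μ,ν) = inf {δ > 0 | μ(A) ≤ ν(A_δ) + δ for all Borel A}`. -/
noncomputable def prokhorov (μ ν : ProbabilityMeasure X) : ℝ :=
  sInf {δ : ℝ | 0 < δ ∧ ∀ A : Set X, MeasurableSet A →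
    (μ A : ℝ) ≤ (ν (Metric.thickening δ A) : ℝ) + δ}

end Paper

open Paper

section Aux
variable {X : Type*} [MetricSpace X]

lemma span_le_of_isSpan {α : Type*} (D : α → α → ℝ) (S : α → α) (n : ℕ) (ε : ℝ)
    {E : Finset α} (h : IsSpan D S n ε E) : span D S n ε ≤ E.card :=
  Nat.sInf_le ⟨E, rfl, h⟩

lemma exists_isSpan_card_span {α : Type*} (D : α → α → ℝ) (S : α → α) (n : ℕ) (ε : ℝ)
    (h : ∃ E : Finset α, IsSpan D S n ε E) :
    ∃ E : Finset α, E.card = span D S n ε ∧ IsSpan D S n ε E := by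
  obtain ⟨E, hE⟩ := h
  obtain ⟨F, h1, h2⟩ := Nat.sInf_mem (⟨E.card, E, rfl, hE⟩ :
    {k | ∃ E : Finset _, E.card = k ∧ IsSpan D S n ε E}.Nonempty)
  exact ⟨F, h1, h2⟩

lemma exists_isSpan [CompactSpace X] (T : X → X) (hT : Continuous T) (n : ℕ) {ε : ℝ}
    (hε : 0 < ε) : ∃ E : Finset X, IsSpan dist T n ε E := by
  classical
  set U : X → Set X := fun y => {x | ∀ i < n, dist (T^[i] x) (T^[i] y) < ε} with hU
  have hUo : ∀ y, IsOpen (U y) := by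
    intro y
    have : U y = ⋂ i ∈ Finset.range n, {x | dist (T^[i] x) (T^[i] y) < ε} := by
      ext x; simp [hU]
    rw [this]
    exact isOpen_biInter_finset fun i _ =>
      isOpen_lt ((hT.iterate i).dist continuous_const) continuous_const
  have hcov : (univ : Set X) ⊆ ⋃ y, U y := fun x _ => mem_iUnion.2 ⟨x, fun i _ => by simpa using hε⟩
  obtain ⟨t, ht⟩ := isCompact_univ.elim_finite_subcover U hUo hcov
  refine ⟨t, fun x => ?_⟩
  obtain ⟨y, hy, hxy⟩ := mem_iUnion₂.1 (ht (mem_univ x))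
  exact ⟨y, hy, hxy⟩

lemma indK_iter_coe (T : X → X) (hT : Continuous T) (i : ℕ) (W : NonemptyCompacts X) :
    (((indK T hT)^[i] W : NonemptyCompacts X) : Set X) = T^[i] '' (W : Set X) := by
  induction i with
  | zero => simp
  | succ i ih =>
    rw [Function.iterate_succ_apply', Function.iterate_succ']
    show T '' (((indK T hT)^[i] W : NonemptyCompacts X) : Set X) = (T ∘ T^[i]) '' (W : Set X)
    rw [ih, Set.image_comp]

lemma spanT_le (T : X → X) (hT : Continuous T) (n : ℕ) {ε : ℝ}
    {𝓔 : Finset (NonemptyCompacts X)} (h : IsSpan dist (indK T hT) n ε 𝓔) :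
    ∃ E : Finset X, E.card ≤ 𝓔.card ∧ IsSpan dist T n ε E := by
  classical
  refine ⟨𝓔.image (fun W => W.nonempty.some), Finset.card_image_le, fun x => ?_⟩
  obtain ⟨W, hW, hWx⟩ := h ⟨⟨{x}, isCompact_singleton⟩, Set.singleton_nonempty x⟩
  refine ⟨W.nonempty.some, Finset.mem_image_of_mem _ hW, fun i hi => ?_⟩
  have h1 := hWx i hi
  rw [NonemptyCompacts.dist_eq, indK_iter_coe, indK_iter_coe] at h1
  simp only [NonemptyCompacts.coe_mk, Compacts.coe_mk, Set.image_singleton] at h1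
  have fin : EMetric.hausdorffEdist (T^[i] '' (W : Set X)) ({T^[i] x} : Set X) ≠ ⊤ :=
    Metric.hausdorffEdist_ne_top_of_nonempty_of_bounded (W.nonempty.image _)
      (Set.singleton_nonempty _) ((W.isCompact.image (hT.iterate i)).isBounded)
      Bornology.isBounded_singleton
  have h2 := Metric.infDist_le_hausdorffDist_of_mem
    (Set.mem_image_of_mem (T^[i]) W.nonempty.some_mem) fin
  rw [Metric.infDist_singleton] at h2
  calc dist (T^[i] x) (T^[i] W.nonempty.some)
      = dist (T^[i] W.nonempty.some) (T^[i] x) := dist_comm _ _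
    _ ≤ hausdorffDist (T^[i] '' (W : Set X)) ({T^[i] x} : Set X) := h2
    _ = hausdorffDist ({T^[i] x} : Set X) (T^[i] '' (W : Set X)) :=
        Metric.hausdorffDist_comm
    _ < ε := h1

lemma spanK_le [Nonempty X] (T : X → X) (hT : Continuous T) (n : ℕ) {ε : ℝ} (hε : 0 < ε)
    {E : Finset X} (h : IsSpan dist T n (ε / 2) E) :
    ∃ 𝓔 : Finset (NonemptyCompacts X), 𝓔.card ≤ 2 ^ E.card ∧
      IsSpan dist (indK T hT) n ε 𝓔 := by
  classical
  set d : NonemptyCompacts X :=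
    ⟨⟨{Classical.arbitrary X}, isCompact_singleton⟩, Set.singleton_nonempty _⟩ with hd
  set g : Finset X → NonemptyCompacts X := fun F =>
    if hF : F.Nonempty then ⟨⟨↑F, F.finite_toSet.isCompact⟩, Finset.coe_nonempty.2 hF⟩ else d
    with hg
  refine ⟨E.powerset.image g,
    le_trans Finset.card_image_le (le_of_eq (Finset.card_powerset E)), fun W => ?_⟩
  set F : Finset X :=
    E.filter (fun y => ∃ x ∈ (W : Set X), ∀ i < n, dist (T^[i] x) (T^[i] y) < ε / 2) with hF
  have hFne : F.Nonempty := by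
    obtain ⟨x0, hx0⟩ := W.nonempty
    obtain ⟨y, hy, hxy⟩ := h x0
    exact ⟨y, Finset.mem_filter.2 ⟨hy, ⟨x0, hx0, hxy⟩⟩⟩
  refine ⟨g F, Finset.mem_image_of_mem _ (Finset.mem_powerset.2 (Finset.filter_subset _ _)),
    fun i hi => ?_⟩
  have hgF : ((g F : NonemptyCompacts X) : Set X) = (↑F : Set X) := by
    rw [hg]; simp only [dif_pos hFne]; rfl
  rw [NonemptyCompacts.dist_eq, indK_iter_coe, indK_iter_coe, hgF]
  have hle : hausdorffDist (T^[i] '' (W : Set X)) (T^[i] '' (↑F : Set X)) ≤ ε / 2 := by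
    apply Metric.hausdorffDist_le_of_mem_dist (le_of_lt (half_pos hε))
    · rintro _ ⟨x, hx, rfl⟩
      obtain ⟨y, hy, hxy⟩ := h x
      have hyF : y ∈ F := Finset.mem_filter.2 ⟨hy, ⟨x, hx, hxy⟩⟩
      exact ⟨T^[i] y, Set.mem_image_of_mem _ (Finset.mem_coe.2 hyF), (hxy i hi).le⟩
    · rintro _ ⟨y, hy, rfl⟩
      obtain ⟨-, x, hx, hxy⟩ := Finset.mem_filter.1 (Finset.mem_coe.1 hy)
      exact ⟨T^[i] x, Set.mem_image_of_mem _ hx, by rw [dist_comm]; exact (hxy i hi).le⟩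
  linarith

end Aux

open Paper in
/-- The spanning numbers of `T_K` are bounded in `n` at every scale iff those
of `T` are; equivalently `o(T_K) = ⟦0⟧ ↔ o(T) = ⟦0⟧`. -/
theorem induced_hyperspace_bounded_iff_base_bounded
    {X : Type*} [MetricSpace X] [CompactSpace X] (T : X → X) (hT : Continuous T) :
    (∀ ε > (0 : ℝ), ∃ C > (0 : ℝ), ∀ n : ℕ, (span dist (indK T hT) n ε : ℝ) ≤ C) ↔
    (∀ ε > (0 : ℝ), ∃ C > (0 : ℝ), ∀ n : ℕ, (span dist T n ε : ℝ) ≤ C) := by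
  rcases isEmpty_or_nonempty X with hX | hX
  · have h1 : ∀ (n : ℕ) (ε : ℝ), span (dist : X → X → ℝ) T n ε = 0 := fun n ε =>
      Nat.sInf_eq_zero.2 (Or.inl ⟨∅, rfl, fun x => (hX.false x).elim⟩)
    have hK : IsEmpty (NonemptyCompacts X) := ⟨fun W => hX.false W.nonempty.some⟩
    have h2 : ∀ (n : ℕ) (ε : ℝ), span dist (indK T hT) n ε = 0 := fun n ε =>
      Nat.sInf_eq_zero.2 (Or.inl ⟨∅, rfl, fun W => (hK.false W).elim⟩)
    constructor <;> intro _ ε hε <;> exact ⟨1, one_pos, fun n => by simp [h1, h2]⟩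
  constructor
  · intro H ε hε
    obtain ⟨C, hC, hCn⟩ := H ε hε
    refine ⟨C, hC, fun n => ?_⟩
    obtain ⟨E0, hE0⟩ := exists_isSpan T hT n (half_pos hε)
    obtain ⟨𝓔0, -, h𝓔0⟩ := spanK_le T hT n hε hE0
    obtain ⟨𝓔, h𝓔card, h𝓔⟩ := exists_isSpan_card_span _ _ n ε ⟨𝓔0, h𝓔0⟩
    obtain ⟨E, hEcard, hE⟩ := spanT_le T hT n h𝓔
    calc ((span dist T n ε : ℕ) : ℝ) ≤ (E.card : ℝ) := by
          exact_mod_cast span_le_of_isSpan _ _ _ _ hE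
      _ ≤ (𝓔.card : ℝ) := by exact_mod_cast hEcard
      _ = ((span dist (indK T hT) n ε : ℕ) : ℝ) := by exact_mod_cast h𝓔card
      _ ≤ C := hCn n
  · intro H ε hε
    obtain ⟨C, hC, hCn⟩ := H (ε / 2) (half_pos hε)
    refine ⟨((2 ^ ⌊C⌋₊ : ℕ) : ℝ), by positivity, fun n => ?_⟩
    obtain ⟨E0, hE0⟩ := exists_isSpan T hT n (half_pos hε)
    obtain ⟨E, hEcard, hE⟩ := exists_isSpan_card_span _ _ n (ε / 2) ⟨E0, hE0⟩
    obtain ⟨𝓔, h𝓔card, h𝓔⟩ := spanK_le T hT n hε hE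
    have h1 : span dist (indK T hT) n ε ≤ 2 ^ E.card :=
      le_trans (span_le_of_isSpan _ _ _ _ h𝓔) h𝓔card
    have h2 : E.card ≤ ⌊C⌋₊ := Nat.le_floor (by rw [hEcard]; exact hCn n)
    exact_mod_cast le_trans h1 (Nat.pow_le_pow_right (by norm_num) h2)
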